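/- Let K|k be a function field over an algebraically closed field k and let ℓ be a prime. Then an element x ∈ K^× is an ℓ^n-th power in K^× for every n ≥ 1 if and only if x ∈ k^×; equivalently, ⋂_{n≥1} (K^×)^{ℓ^n} = k^×. -/

import Mathlib

open IntermediateField Polynomial Module

universe u v

lemma aux_dvd {k K : Type*} [Field k] [Field K] [Algebra k K] {u : K}
    (hu : Transcendental k u) {b : K} (hb : b ∈ IntermediateField.adjoin k {u})
    {m d : ℕ} (hm : m ≠ 0) (h : b ^ m = u ^ d) : m ∣ d := by
  rcases Nat.eq_zero_or_pos d with rfl | hd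
  · exact dvd_zero m
  have hu0 : u ≠ 0 := fun h0 => hu (h0 ▸ isAlgebraic_zero)
  have hb0 : b ≠ 0 := by
    intro h0
    rw [h0, zero_pow hm] at h
    exact (pow_ne_zero d hu0) h.symm
  obtain ⟨p, q, hpq⟩ := (IntermediateField.mem_adjoin_simple_iff k b).1 hb
  have hq0 : aeval u q ≠ 0 := by
    intro h0; rw [h0, div_zero] at hpq; exact hb0 hpq
  have hp0 : aeval u p ≠ 0 := by
    intro h0; rw [h0, zero_div] at hpq; exact hb0 hpq
  have hbq : b * aeval u q = aeval u p := by
    rw [hpq]; field_simp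
  have key : aeval u (p ^ m) = aeval u (X ^ d * q ^ m) := by
    have h2 := congrArg (· ^ m) hbq
    simp only [mul_pow] at h2
    rw [h] at h2
    simp only [map_mul, map_pow, aeval_X]
    exact h2.symm
  have hpoly : p ^ m = X ^ d * q ^ m := by
    have h3 := transcendental_iff.mp hu (p ^ m - X ^ d * q ^ m) (by rw [map_sub, key, sub_self])
    have := sub_eq_zero.mp h3
    exact this
  have hpne : p ≠ 0 := fun h0 => hp0 (by rw [h0, map_zero])
  have hqne : q ≠ 0 := fun h0 => hq0 (by rw [h0, map_zero])
  have hdeg := congrArg natDegree hpoly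
  rw [natDegree_pow, natDegree_mul (pow_ne_zero _ X_ne_zero) (pow_ne_zero _ hqne),
    natDegree_X_pow, natDegree_pow] at hdeg
  have h4 : m ∣ d + m * q.natDegree := ⟨p.natDegree, by omega⟩
  exact (Nat.dvd_add_right (Dvd.intro _ rfl)).mp (by rwa [Nat.add_comm] at h4)

lemma aux_li {F K : Type*} [Field F] [Field K] [Algebra F K] (E : IntermediateField F K)
    (hE : ∀ y ∈ E, IsIntegral F y) {t : K} (ht : Transcendental F t)
    {ι : Type*} {v : ι → K} (hv : ∀ i, v i ∈ E) (hli : LinearIndependent F v) :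
    LinearIndependent (↥(IntermediateField.adjoin F {t})) v := by
  haveI : Algebra.IsIntegral F ↥E := ⟨fun y => (IntermediateField.isIntegral_iff).2 (hE y y.2)⟩
  have htE : Transcendental (↥E) t := by
    intro halg
    exact ht (isIntegral_trans t halg.isIntegral).isAlgebraic
  classical
  rw [linearIndependent_iff'] at hli ⊢
  intro s g hsum i hi
  have hrep : ∀ j : ι, ∃ P Q : F[X], aeval t Q ≠ 0 ∧ (g j : K) * aeval t Q = aeval t P := by
    intro j
    obtain ⟨p, q, hpq⟩ := (IntermediateField.mem_adjoin_simple_iff F ((g j : K))).1 (g j).2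
    by_cases h0 : aeval t q = 0
    · exact ⟨0, 1, by simp, by rw [hpq, h0, div_zero]; simp⟩
    · exact ⟨p, q, h0, by rw [hpq]; field_simp⟩
  choose P Q hQ hPQ using hrep
  set R : ι → F[X] := fun j => P j * ∏ l ∈ s.erase j, Q l with hR
  have key : ∀ j ∈ s, (g j : K) * aeval t (∏ l ∈ s, Q l) = aeval t (R j) := by
    intro j hj
    rw [← Finset.mul_prod_erase s Q hj, map_mul, ← mul_assoc, hPQ, hR, map_mul]
  have hsum' : ∑ j ∈ s, aeval t (R j) * v j = 0 := by
    have h5 := congrArg (· * aeval t (∏ l ∈ s, Q l)) hsum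
    simp only [Finset.sum_mul, zero_mul] at h5
    rw [← h5]
    refine Finset.sum_congr rfl fun j hj => ?_
    rw [← key j hj]
    have : (g j) • v j = (g j : K) * v j := by
      rw [Algebra.smul_def]; rfl
    rw [this]; ring
  set N := (s.sup fun j => (R j).natDegree) + 1 with hN
  have hdeg : ∀ j ∈ s, (R j).natDegree < N := fun j hj => Nat.lt_succ_of_le (Finset.le_sup (f := fun j => (R j).natDegree) hj)
  have hmemw : ∀ jj : ℕ, (∑ j ∈ s, (R j).coeff jj • v j) ∈ E := by
    intro jj
    refine sum_mem fun j hj => ?_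
    rw [Algebra.smul_def]
    exact E.mul_mem (E.algebraMap_mem _) (hv j)
  set w : ℕ → ↥E := fun jj => ⟨∑ j ∈ s, (R j).coeff jj • v j, hmemw jj⟩ with hw
  set Rpoly : (↥E)[X] := ∑ jj ∈ Finset.range N, C (w jj) * X ^ jj with hRpoly
  have haR : aeval t Rpoly = 0 := by
    rw [hRpoly]
    simp only [map_sum, map_mul, map_pow, aeval_C, aeval_X]
    have exp : ∀ j ∈ s, aeval t (R j) * v j
        = ∑ jj ∈ Finset.range N, ((R j).coeff jj • v j) * t ^ jj := by
      intro j hj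
      rw [aeval_eq_sum_range' (hdeg j hj), Finset.sum_mul]
      refine Finset.sum_congr rfl fun jj _ => ?_
      rw [smul_mul_assoc, smul_mul_assoc, mul_comm (t ^ jj)]
    rw [Finset.sum_congr rfl exp, Finset.sum_comm] at hsum'
    rw [← hsum']
    refine Finset.sum_congr rfl fun jj _ => ?_
    rw [← Finset.sum_mul]
    congr 1
  have hR0 : Rpoly = 0 := transcendental_iff.mp htE Rpoly haR
  have hw0 : ∀ jj, jj < N → (w jj : K) = 0 := by
    intro jj hjj
    have : Rpoly.coeff jj = w jj := by
      rw [hRpoly, finset_sum_coeff]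
      simp only [coeff_C_mul, coeff_X_pow, mul_ite, mul_one, mul_zero]
      rw [Finset.sum_ite_eq (Finset.range N) jj w]
      simp [hjj]
    rw [hR0, coeff_zero] at this
    exact_mod_cast congrArg (Subtype.val) this.symm
  have hcoeff : ∀ j ∈ s, ∀ jj, jj < N → (R j).coeff jj = 0 := by
    intro j hj jj hjj
    exact hli s (fun j' => (R j').coeff jj) (hw0 jj hjj) j hj
  have hRj0 : R i = 0 := by
    ext jj
    rcases lt_or_ge jj N with h | h
    · simpa using hcoeff i hi jj h
    · simp only [coeff_zero]
      exact coeff_eq_zero_of_natDegree_lt (lt_of_lt_of_le (hdeg i hi) h)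
  have hPi : P i = 0 := by
    rcases mul_eq_zero.mp hRj0 with h | h
    · exact h
    · exfalso
      obtain ⟨l, hl, hl0⟩ := Finset.prod_eq_zero_iff.mp h
      exact hQ l (by rw [hl0, map_zero])
  have : (g i : K) * aeval t (Q i) = 0 := by rw [hPQ, hPi, map_zero]
  have hgi : (g i : K) = 0 := by
    rcases mul_eq_zero.mp this with h | h
    · exact h
    · exact absurd h (hQ i)
  exact_mod_cast hgi
lemma aux_adjoin_top {k K : Type*} [Field k] [Field K] [Algebra k K]
    (L : IntermediateField k K) {S : Set K} (h : IntermediateField.adjoin k S = ⊤) :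
    IntermediateField.adjoin (↥L) S = ⊤ := by
  rw [eq_top_iff]
  intro z _
  have hz : z ∈ IntermediateField.adjoin k S := by rw [h]; trivial
  have hle : IntermediateField.adjoin k S ≤
      (IntermediateField.adjoin (↥L) S).restrictScalars k := by
    apply IntermediateField.adjoin_le_iff.mpr
    intro w hw
    show w ∈ (IntermediateField.adjoin (↥L) S).restrictScalars k
    rw [IntermediateField.mem_restrictScalars]
    exact IntermediateField.subset_adjoin _ _ hw
  have := hle hz
  rwa [IntermediateField.mem_restrictScalars] at this
theorem auxA (K : Type v) [Field K] :
    ∀ (n : ℕ) (F : Type v) [Field F] [Algebra F K] (S : Finset K),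
      S.card = n → IntermediateField.adjoin F (S : Set K) = ⊤ →
      FiniteDimensional F (algebraicClosure F K) := by
  intro n
  induction n with
  | zero =>
    intro F _ _ S hcard htop
    rw [Finset.card_eq_zero.mp hcard] at htop
    simp only [Finset.coe_empty, IntermediateField.adjoin_empty] at htop
    have hsurj : Function.Surjective (algebraMap F K) := fun z => by
      have hz : z ∈ (⊥ : IntermediateField F K) := by rw [htop]; trivial
      obtain ⟨c, hc⟩ := IntermediateField.mem_bot.mp hz
      exact ⟨c, hc⟩
    have : FiniteDimensional F K := Module.Finite.of_surjective (Algebra.linearMap F K) hsurj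
    infer_instance
  | succ n ih =>
    intro F _ _ S hcard htop
    classical
    obtain ⟨a, S', haS', hSins, hcard'⟩ := Finset.card_eq_succ.mp hcard
    rw [← hSins] at htop
    have hins : IntermediateField.adjoin (↥F⟮a⟯) ((insert a S' : Finset K) : Set K) = ⊤ :=
      aux_adjoin_top _ htop
    have hmema : a ∈ IntermediateField.adjoin (↥F⟮a⟯) ((S' : Finset K) : Set K) := by
      have h1 : a ∈ F⟮a⟯ := IntermediateField.mem_adjoin_simple_self F a
      have := IntermediateField.algebraMap_mem
        (IntermediateField.adjoin (↥F⟮a⟯) ((S' : Finset K) : Set K)) (⟨a, h1⟩ : ↥F⟮a⟯)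
      exact this
    have htop' : IntermediateField.adjoin (↥F⟮a⟯) ((S' : Finset K) : Set K) = ⊤ := by
      rw [eq_top_iff, ← hins]
      refine IntermediateField.adjoin_le_iff.mpr ?_
      rw [Finset.coe_insert]
      exact Set.insert_subset hmema (IntermediateField.subset_adjoin _ _)
    have IH := ih ↥F⟮a⟯ S' hcard' htop'
    by_cases ha : IsIntegral F a
    · haveI : FiniteDimensional F ↥F⟮a⟯ := IntermediateField.adjoin.finiteDimensional ha
      haveI : FiniteDimensional (↥F⟮a⟯) ↥(algebraicClosure ↥F⟮a⟯ K) := IH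
      haveI h3 : FiniteDimensional F ↥(algebraicClosure ↥F⟮a⟯ K) :=
        FiniteDimensional.trans F (↥F⟮a⟯) ↥(algebraicClosure ↥F⟮a⟯ K)
      have hle : (algebraicClosure F K) ≤
          ((algebraicClosure ↥F⟮a⟯ K).restrictScalars F) :=
        algebraicClosure.le_restrictScalars F (↥F⟮a⟯) K
      haveI h4 : FiniteDimensional F
          ↥(((algebraicClosure ↥F⟮a⟯ K).restrictScalars F).toSubmodule) := h3
      exact Submodule.finiteDimensional_of_le
        (S₁ := (algebraicClosure F K).toSubmodule)
        (S₂ := ((algebraicClosure ↥F⟮a⟯ K).restrictScalars F).toSubmodule) hle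
    · have ht : Transcendental F a := fun halg => ha halg.isIntegral
      set d := finrank (↥F⟮a⟯) ↥(algebraicClosure ↥F⟮a⟯ K) with hd
      have hrank : Module.rank F ↥(algebraicClosure F K) ≤ (d : Cardinal) := by
        refine rank_le fun s hs => ?_
        have h1 : LinearIndependent F (fun i : s => ((i : ↥(algebraicClosure F K)) : K)) := by
          have := hs.map' (algebraicClosure F K).val.toLinearMap
            (LinearMap.ker_eq_bot.mpr (Subtype.val_injective))
          exact this
        have h2 := aux_li (algebraicClosure F K)
          (fun y hy => mem_algebraicClosure_iff'.mp hy) ht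
          (v := fun i : s => ((i : ↥(algebraicClosure F K)) : K))
          (fun i => (i : ↥(algebraicClosure F K)).2) h1
        have hmem : ∀ i : s, ((i : ↥(algebraicClosure F K)) : K) ∈ algebraicClosure (↥F⟮a⟯) K :=
          fun i => mem_algebraicClosure_iff'.mpr
            ((mem_algebraicClosure_iff'.mp (i : ↥(algebraicClosure F K)).2).tower_top)
        set v' : s → ↥(algebraicClosure (↥F⟮a⟯) K) := fun i => ⟨_, hmem i⟩ with hv'
        have h3 : LinearIndependent (↥F⟮a⟯) v' :=
          LinearIndependent.of_comp (algebraicClosure (↥F⟮a⟯) K).val.toLinearMap h2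
        haveI : FiniteDimensional (↥F⟮a⟯) ↥(algebraicClosure ↥F⟮a⟯ K) := IH
        have h4 := h3.fintype_card_le_finrank
        simpa using h4
      have h5 : Module.rank F ↥(algebraicClosure F K) < Cardinal.aleph0 :=
        lt_of_le_of_lt hrank (Cardinal.nat_lt_aleph0 d)
      haveI : Module.Free F ↥(algebraicClosure F K) := Module.Free.of_divisionRing F ↥(algebraicClosure F K)
      exact Module.rank_lt_aleph0_iff.mp h5

set_option maxHeartbeats 2000000 in
set_option synthInstance.maxHeartbeats 1000000 in
/-- For a function field `K|k` over an algebraically closed field `k` and a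
prime `ℓ`, a nonzero `x ∈ K` is an `ℓ^n`-th power for every `n ≥ 1` if and only if `x` is a
nonzero constant, i.e. `⋂_{n ≥ 1} (K^×)^{ℓ^n} = k^×`. -/
theorem statement16 (ℓ : ℕ) (hℓ : ℓ.Prime)
    (k K : Type*) [Field k] [Field K] [Algebra k K] [IsAlgClosed k]
    (hKfg : (⊤ : IntermediateField k K).FG)
    (x : K) (hx : x ≠ 0) :
    (∀ n : ℕ, 1 ≤ n → ∃ y : K, y ^ ℓ ^ n = x) ↔
      ∃ c : k, c ≠ 0 ∧ algebraMap k K c = x := by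
  constructor
  · intro h
    by_cases halg : IsAlgebraic k x
    · haveI : FiniteDimensional k ↥k⟮x⟯ :=
        IntermediateField.adjoin.finiteDimensional halg.isIntegral
      haveI : Algebra.IsIntegral k ↥k⟮x⟯ := Algebra.IsIntegral.of_finite k _
      obtain ⟨c, hc⟩ := (IsAlgClosed.algebraMap_bijective_of_isIntegral
        (k := k) (K := ↥k⟮x⟯)).2 ⟨x, IntermediateField.mem_adjoin_simple_self k x⟩
      have hcc : algebraMap k K c = x := by
        have := congrArg (Subtype.val) hc
        simpa using this
      refine ⟨c, fun h0 => hx ?_, hcc⟩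
      rw [h0, map_zero] at hcc
      exact hcc.symm
    · exfalso
      have ht : Transcendental k x := halg
      obtain ⟨T, hT⟩ := hKfg
      have htop : IntermediateField.adjoin (↥k⟮x⟯) ((T : Set K)) = ⊤ := aux_adjoin_top _ hT
      haveI hfin : FiniteDimensional (↥k⟮x⟯) (algebraicClosure (↥k⟮x⟯) K) :=
        auxA K T.card (↥k⟮x⟯) T rfl htop
      set D := finrank (↥k⟮x⟯) ↥(algebraicClosure (↥k⟮x⟯) K) with hD
      have hnD : D < ℓ ^ (D + 1) := by
        calc D < 2 ^ (D + 1) := (Nat.lt_two_pow_self (n := D)).trans_le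
                  (Nat.pow_le_pow_right (by norm_num) (Nat.le_succ D))
        _ ≤ ℓ ^ (D + 1) := Nat.pow_le_pow_left hℓ.two_le _
      obtain ⟨y, hy⟩ := h (D + 1) (Nat.le_add_left 1 D)
      set x' : ↥k⟮x⟯ := ⟨x, IntermediateField.mem_adjoin_simple_self k x⟩ with hx'
      have hm0 : ℓ ^ (D + 1) ≠ 0 := pow_ne_zero _ hℓ.ne_zero
      have hyint : IsIntegral (↥k⟮x⟯) y := by
        refine ⟨X ^ (ℓ ^ (D + 1)) - C x', monic_X_pow_sub_C _ hm0, ?_⟩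
        rw [eval₂_sub, eval₂_pow, eval₂_X, eval₂_C]
        have : algebraMap (↥k⟮x⟯) K x' = x := rfl
        rw [this, hy, sub_self]
      haveI : FiniteDimensional (↥k⟮x⟯) ↥(IntermediateField.adjoin (↥k⟮x⟯) {y}) :=
        IntermediateField.adjoin.finiteDimensional hyint
      set d := finrank (↥k⟮x⟯) ↥(IntermediateField.adjoin (↥k⟮x⟯) {y}) with hd
      have hd1 : 0 < d := Module.finrank_pos
      have hdD : d ≤ D := by
        have hle : IntermediateField.adjoin (↥k⟮x⟯) {y} ≤ algebraicClosure (↥k⟮x⟯) K := by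
          apply IntermediateField.adjoin_le_iff.mpr
          intro w hw
          rw [Set.mem_singleton_iff] at hw
          rw [hw]
          exact mem_algebraicClosure_iff'.mpr hyint
        have hle' : (IntermediateField.adjoin (↥k⟮x⟯) {y}).toSubmodule ≤
            (algebraicClosure (↥k⟮x⟯) K).toSubmodule := fun z hz => hle hz
        haveI : Module.Finite (↥k⟮x⟯) ↥((algebraicClosure (↥k⟮x⟯) K).toSubmodule) := hfin
        exact Submodule.finrank_mono hle'
      set g := IntermediateField.AdjoinSimple.gen (↥k⟮x⟯) y with hg
      have hgen : g ^ (ℓ ^ (D + 1)) = algebraMap (↥k⟮x⟯) ↥(IntermediateField.adjoin (↥k⟮x⟯) {y}) x' := by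
        apply Subtype.ext
        push_cast
        exact hy
      have hnorm : (Algebra.norm (↥k⟮x⟯) g) ^ (ℓ ^ (D + 1)) = x' ^ d := by
        rw [← map_pow, hgen, Algebra.norm_algebraMap, hd]
      have hcoe : ((Algebra.norm (↥k⟮x⟯) g : ↥k⟮x⟯) : K) ^ (ℓ ^ (D + 1)) = x ^ d := by
        have h2 := congrArg (algebraMap (↥k⟮x⟯) K) hnorm
        rw [map_pow, map_pow] at h2
        exact h2
      have hdvd : ℓ ^ (D + 1) ∣ d :=
        aux_dvd ht (Algebra.norm (↥k⟮x⟯) g).2 hm0 hcoe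
      have := Nat.le_of_dvd hd1 hdvd
      omega
  · rintro ⟨c, hc0, rfl⟩ n hn
    obtain ⟨z, hz⟩ := IsAlgClosed.exists_pow_nat_eq c (n := ℓ ^ n)
      (Nat.pow_pos hℓ.pos)
    exact ⟨algebraMap k K z, by rw [← map_pow, hz]⟩
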